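/- Let F be an algebraically closed field, e₁ = (1,0,0) ∈ F^3, and N = (0, e₁; 0, 0) ∈ O(F). For a split octonion A and a positive integer k₁, the equation A = N·X^{k₁} has a solution X ∈ O(F) if and only if A has the form (α, (b₁,0,0); (0,c₂,c₃), 0) for some α, b₁, c₂, c₃ ∈ F. -/

import Mathlib

/-- Zorn vector matrices: the split octonion algebra over `F`. -/
structure Oct (F : Type*) where
  a : F              -- upper-left scalar η
  b : Fin 3 → F      -- upper-right vector x
  c : Fin 3 → F      -- lower-left vector y
  d : F              -- lower-right scalar ζ

namespace Oct

variable {F : Type*} [Field F]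

/-- standard bilinear form on F^3 -/
def dot (x y : Fin 3 → F) : F := x 0 * y 0 + x 1 * y 1 + x 2 * y 2

/-- cross product on F^3, satisfying ⟨x ∧ y, z⟩ = det(x,y,z) -/
def cross (x y : Fin 3 → F) : Fin 3 → F :=
  ![x 1 * y 2 - x 2 * y 1, x 2 * y 0 - x 0 * y 2, x 0 * y 1 - x 1 * y 0]

instance : Add (Oct F) :=
  ⟨fun A B => ⟨A.a + B.a, A.b + B.b, A.c + B.c, A.d + B.d⟩⟩

instance : Mul (Oct F) :=
  ⟨fun A B =>
    ⟨A.a * B.a + dot A.b B.c,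
     A.a • B.b + B.d • A.b + cross A.c B.c,
     A.d • B.c + B.a • A.c + cross A.b B.b,
     A.d * B.d + dot A.c B.b⟩⟩

instance : SMul F (Oct F) :=
  ⟨fun t A => ⟨t * A.a, t • A.b, t • A.c, t * A.d⟩⟩

instance : One (Oct F) := ⟨⟨1, 0, 0, 1⟩⟩

/-- powers, via A^{n+1} = A · A^n (well-defined by power-associativity) -/
def pow (A : Oct F) : ℕ → Oct F
  | 0 => 1
  | n + 1 => A * pow A n

/-- octonion conjugation -/
def conj (A : Oct F) : Oct F := ⟨A.d, -A.b, -A.c, A.a⟩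

/-- the norm form -/
def norm (A : Oct F) : F := A.a * A.d - dot A.b A.c

end Oct

namespace Oct

variable {F : Type*} [Field F]

set_option linter.unusedSectionVars false

lemma ext' {A B : Oct F} (h1 : A.a = B.a) (h2 : ∀ i, A.b i = B.b i)
    (h3 : ∀ i, A.c i = B.c i) (h4 : A.d = B.d) : A = B := by
  cases A; cases B
  simp only [mk.injEq]
  exact ⟨h1, funext h2, funext h3, h4⟩

lemma mul_a (A B : Oct F) : (A * B).a = A.a * B.a + dot A.b B.c := rfl
lemma mul_b (A B : Oct F) : (A * B).b = A.a • B.b + B.d • A.b + cross A.c B.c := rfl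
lemma mul_c (A B : Oct F) : (A * B).c = A.d • B.c + B.a • A.c + cross A.b B.b := rfl
lemma mul_d (A B : Oct F) : (A * B).d = A.d * B.d + dot A.c B.b := rfl
lemma one_a : (1 : Oct F).a = 1 := rfl
lemma one_b : (1 : Oct F).b = 0 := rfl
lemma one_c : (1 : Oct F).c = 0 := rfl
lemma one_d : (1 : Oct F).d = 1 := rfl

lemma nmul (Y : Oct F) :
    (⟨0, ![1, 0, 0], 0, 0⟩ : Oct F) * Y
      = ⟨Y.c 0, ![Y.d, 0, 0], ![0, -(Y.b 2), Y.b 1], 0⟩ := by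
  refine ext' ?_ (fun i => ?_) (fun i => ?_) ?_
  · simp [mul_a, dot]
  · fin_cases i <;> simp [mul_b, cross]
  · fin_cases i <;> simp [mul_c, cross]
  · simp [mul_d, dot]

lemma mul_one' (A : Oct F) : A * 1 = A := by
  refine ext' ?_ (fun i => ?_) (fun i => ?_) ?_
  · simp [mul_a, one_a, one_c, dot]
  · fin_cases i <;> simp [mul_b, one_b, one_c, one_d, cross]
  · fin_cases i <;> simp [mul_c, one_a, one_b, one_c, cross]
  · simp [mul_d, one_b, one_d, dot]


lemma pow_idem {Z : Oct F} (h : Z * Z = Z) : ∀ k, 1 ≤ k → pow Z k = Z := by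
  intro k hk
  induction k with
  | zero => omega
  | succ n ih =>
    cases n with
    | zero => simp [pow, mul_one']
    | succ m =>
      have h2 := ih (by omega)
      show Z * pow Z (m+1) = Z
      rw [h2, h]

lemma cross_self (x : Fin 3 → F) : cross x x = 0 := by
  funext i; fin_cases i <;> (simp [cross]; ring)

lemma idem_of (a d : F) (b c : Fin 3 → F) (ht : a + d = 1)
    (hn : dot b c = a * d) :
    (⟨a, b, c, d⟩ : Oct F) * ⟨a, b, c, d⟩ = ⟨a, b, c, d⟩ := by
  refine ext' ?_ (fun i => ?_) (fun i => ?_) ?_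
  · show a * a + dot b c = a
    rw [hn]; linear_combination a * ht
  · show (a • b + d • b + cross c c) i = b i
    simp only [cross_self, Pi.add_apply, Pi.smul_apply, smul_eq_mul, Pi.zero_apply, add_zero]
    linear_combination b i * ht
  · show (d • c + a • c + cross b b) i = c i
    simp only [cross_self, Pi.add_apply, Pi.smul_apply, smul_eq_mul, Pi.zero_apply, add_zero]
    linear_combination c i * ht
  · show d * d + dot c b = d
    simp only [dot] at hn ⊢
    linear_combination hn + d * ht

lemma pow_diag (s : F) : ∀ k, 1 ≤ k → pow (⟨0, 0, 0, s⟩ : Oct F) k = ⟨0, 0, 0, s ^ k⟩ := by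
  intro k hk
  induction k with
  | zero => omega
  | succ n ih =>
    cases n with
    | zero => simpa [pow] using mul_one' _
    | succ m =>
      have h2 := ih (by omega)
      show (⟨0,0,0,s⟩ : Oct F) * pow _ (m+1) = _
      rw [h2]
      refine ext' ?_ (fun i => ?_) (fun i => ?_) ?_
      · simp [mul_a, dot]
      · fin_cases i <;> simp [mul_b, cross]
      · fin_cases i <;> simp [mul_c, cross]
      · simp [mul_d, dot]; ring


end Oct

open Oct
theorem stmt_13 {F : Type*} [Field F] [IsAlgClosed F] (A : Oct F)
    (k₁ : ℕ) (hk₁ : 1 ≤ k₁) :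
    (∃ X : Oct F, A = (⟨0, ![1, 0, 0], 0, 0⟩ : Oct F) * pow X k₁)
      ↔ ∃ α b₁ c₂ c₃ : F, A = (⟨α, ![b₁, 0, 0], ![0, c₂, c₃], 0⟩ : Oct F) := by
  constructor
  · rintro ⟨X, rfl⟩
    exact ⟨(pow X k₁).c 0, (pow X k₁).d, -((pow X k₁).b 2), (pow X k₁).b 1, nmul _⟩
  · rintro ⟨α, b₁, c₂, c₃, rfl⟩
    by_cases hz : α = 0 ∧ c₂ = 0 ∧ c₃ = 0
    · obtain ⟨rfl, rfl, rfl⟩ := hz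
      obtain ⟨s, hs⟩ := IsAlgClosed.exists_pow_nat_eq (k := F) b₁
        (Nat.lt_of_lt_of_le Nat.zero_lt_one hk₁)
      refine ⟨⟨0, 0, 0, s⟩, ?_⟩
      rw [pow_diag s k₁ hk₁, nmul, hs]
      refine ext' ?_ (fun i => ?_) (fun i => ?_) ?_
      · simp
      · fin_cases i <;> simp
      · fin_cases i <;> simp
      · simp
    · have key : ∀ w0 w1 w2 : F,
          w0 * α + c₃ * w1 + (-c₂) * w2 = (1 - b₁) * b₁ →
          (⟨α, ![b₁, 0, 0], ![0, c₂, c₃], 0⟩ : Oct F)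
            = (⟨0, ![1, 0, 0], 0, 0⟩ : Oct F) *
                pow (⟨1 - b₁, ![w0, c₃, -c₂], ![α, w1, w2], b₁⟩ : Oct F) k₁ := by
        intro w0 w1 w2 hw
        rw [pow_idem (idem_of _ _ _ _ (by ring) (by simp [dot]; linear_combination hw)) k₁ hk₁,
          nmul]
        refine (ext' ?_ (fun i => ?_) (fun i => ?_) ?_).symm
        · simp
        · fin_cases i <;> simp
        · fin_cases i <;> simp
        · simp
      rcases (by tauto : α ≠ 0 ∨ c₂ ≠ 0 ∨ c₃ ≠ 0) with h | h | h
      · exact ⟨_, key ((1 - b₁) * b₁ / α) 0 0 (by field_simp; ring)⟩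
      · exact ⟨_, key 0 0 (-((1 - b₁) * b₁ / c₂)) (by field_simp; try ring)⟩
      · exact ⟨_, key 0 ((1 - b₁) * b₁ / c₃) 0 (by field_simp; ring)⟩
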